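/- In the full observation model, restricting attention to control laws of the form U^i_t = ḡ^i_t(X^i_t, Z_{1:t}, U_{1:t-1}) at all control stations i = 1,…,n is without loss of optimality: for every control strategy g of the general form U^i_t = g^i_t(Z_{1:t}, X^i_{1:t}, U_{1:t-1}) there exists a strategy ḡ in which each control law depends only on (X^i_t, Z_{1:t}, U_{1:t-1}) such that J(ḡ) ≤ J(g). -/

import Mathlib

open scoped Classical

namespace ControlSharing

variable {n T : ℕ}
variable {Z : Type} [Fintype Z] [Nonempty Z]
variable {X : Fin n → Type} [∀ i, Fintype (X i)] [∀ i, Nonempty (X i)]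
variable {U : Fin n → Type} [∀ i, Fintype (U i)] [∀ i, Nonempty (U i)]
variable {W0 : Type} [Fintype W0] [Nonempty W0]
variable {W : Fin n → Type} [∀ i, Fintype (W i)] [∀ i, Nonempty (W i)]

/-- A probability weight function on a finite type. -/
def IsLaw {α : Type} [Fintype α] (P : α → ℝ) : Prop :=
  (∀ a, 0 ≤ P a) ∧ ∑ a, P a = 1

/-- Sample space of primitive random variables: the initial shared state `Z₁`, the initial
local states `X₁ⁱ`, the shared-dynamics noises `W⁰_t` and the local noises `Wⁱ_t`. -/
abbrev Omega (T : ℕ) (Z : Type) (X : Fin n → Type) (W0 : Type) (W : Fin n → Type) : Type :=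
  Z × (∀ i, X i) × (Fin T → W0) × (∀ i, Fin T → W i)

/-- The probability weight of a sample point: `Z₁ ~ P_Z`; conditionally on `Z₁` the initial
local states are independent, `X₁ⁱ ~ P_{Xⁱ|Z}(·|Z₁)`; all noises are independent with laws
`P_{W⁰}`, `P_{Wⁱ}`, independent of the initial states. -/
noncomputable def weight (PZ : Z → ℝ) (PX : ∀ i, Z → X i → ℝ) (PW0 : W0 → ℝ)
    (PW : ∀ i, W i → ℝ) (ω : Omega T Z X W0 W) : ℝ :=
  PZ ω.1 * (∏ i, PX i ω.1 (ω.2.1 i)) * (∏ t, PW0 (ω.2.2.1 t)) *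
    (∏ i, ∏ t, PW i (ω.2.2.2 i t))

/-- A general control strategy: station `i` chooses `Uⁱ_t = gⁱ_t(Z_{1:t}, Xⁱ_{1:t}, U_{1:t-1})`. -/
def Strategy (Z : Type) (X U : Fin n → Type) : Type :=
  ∀ (i : Fin n) (t : ℕ), (Fin (t + 1) → Z) → (Fin (t + 1) → X i) →
    (Fin t → ∀ j, U j) → U i

variable (f0 : ℕ → Z → (∀ j, U j) → W0 → Z)
variable (f : ∀ i, ℕ → Z → X i → (∀ j, U j) → W i → X i)

/-- The closed-loop trajectory: histories `(Z_{1:t+1}, X_{1:t+1}, U_{1:t+1})` generated by the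
dynamics `Z_{t+1} = f⁰_t(Z_t, U_t, W⁰_t)`, `Xⁱ_{t+1} = fⁱ_t(Z_t, Xⁱ_t, U_t, Wⁱ_t)` and the
strategy `g`. -/
noncomputable def traj (g : Strategy Z X U) (ω : Omega T Z X W0 W) :
    (t : ℕ) → (Fin (t + 1) → Z) × (∀ i, Fin (t + 1) → X i) × (Fin (t + 1) → ∀ j, U j)
  | 0 =>
    let zh : Fin 1 → Z := fun _ => ω.1
    let xh : ∀ i, Fin 1 → X i := fun i _ => ω.2.1 i
    ⟨zh, xh, fun _ j => g j 0 zh (xh j) (fun s => s.elim0)⟩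
  | t + 1 =>
    let prev := traj g ω t
    let ucur := prev.2.2 (Fin.last t)
    let znew := f0 t (prev.1 (Fin.last t)) ucur
      (if h : t < T then ω.2.2.1 ⟨t, h⟩ else Classical.arbitrary W0)
    let xnew : ∀ i, X i := fun i =>
      f i t (prev.1 (Fin.last t)) (prev.2.1 i (Fin.last t)) ucur
        (if h : t < T then ω.2.2.2 i ⟨t, h⟩ else Classical.arbitrary (W i))
    let zh : Fin (t + 2) → Z := Fin.snoc prev.1 znew
    let xh : ∀ i, Fin (t + 2) → X i := fun i => Fin.snoc (prev.2.1 i) (xnew i)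
    ⟨zh, xh, Fin.snoc prev.2.2 (fun j => g j (t + 1) zh (xh j) prev.2.2)⟩

/-- The shared state process `Z_t`. -/
noncomputable def Zp (g : Strategy Z X U) (t : ℕ) (ω : Omega T Z X W0 W) : Z :=
  (traj f0 f g ω t).1 (Fin.last t)

/-- The local state process `Xⁱ_t`. -/
noncomputable def Xp (g : Strategy Z X U) (i : Fin n) (t : ℕ) (ω : Omega T Z X W0 W) : X i :=
  (traj f0 f g ω t).2.1 i (Fin.last t)

/-- The action process `Uⁱ_t`. -/
noncomputable def Up (g : Strategy Z X U) (i : Fin n) (t : ℕ) (ω : Omega T Z X W0 W) : U i :=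
  (traj f0 f g ω t).2.2 (Fin.last t) i

/-- Probability of an event under a weight function. -/
noncomputable def Pr {Ω : Type} [Fintype Ω] (μ : Ω → ℝ) (A : Ω → Prop) : ℝ :=
  ∑ ω : Ω, if A ω then μ ω else 0

/-- Conditional probability `P(A | B)`. -/
noncomputable def CondPr {Ω : Type} [Fintype Ω] (μ : Ω → ℝ) (A B : Ω → Prop) : ℝ :=
  Pr μ (fun ω => A ω ∧ B ω) / Pr μ B

/-- Conditional expectation `E[h | B]`. -/
noncomputable def CondExp {Ω : Type} [Fintype Ω] (μ : Ω → ℝ) (h : Ω → ℝ) (B : Ω → Prop) : ℝ :=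
  (∑ ω : Ω, if B ω then μ ω * h ω else 0) / Pr μ B

/-- The expected total cost `J(g) = E[∑_{t=1}^T c_t(Z_t, X_t, U_t)]`. -/
noncomputable def J (c : ℕ → Z → (∀ i, X i) → (∀ i, U i) → ℝ)
    (μ : Omega T Z X W0 W → ℝ) (g : Strategy Z X U) : ℝ :=
  ∑ ω : Omega T Z X W0 W, μ ω *
    ∑ t ∈ Finset.range T,
      c t (Zp f0 f g t ω) (fun i => Xp f0 f g i t ω) (fun i => Up f0 f g i t ω)



/-! ### Auxiliary lemmas -/

section Aux
set_option linter.unusedSectionVars false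

variable {g g₁ g₂ : Strategy Z X U} {ω : Omega T Z X W0 W}

lemma Zp_zero (g : Strategy Z X U) (ω : Omega T Z X W0 W) : Zp f0 f g 0 ω = ω.1 := rfl

lemma Xp_zero (g : Strategy Z X U) (i : Fin n) (ω : Omega T Z X W0 W) :
    Xp f0 f g i 0 ω = ω.2.1 i := rfl

lemma Zp_succ (g : Strategy Z X U) (t : ℕ) (ω : Omega T Z X W0 W) :
    Zp f0 f g (t + 1) ω = f0 t (Zp f0 f g t ω) (fun j => Up f0 f g j t ω)
      (if h : t < T then ω.2.2.1 ⟨t, h⟩ else Classical.arbitrary W0) := by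
  simp [Zp, Up, traj, Fin.snoc_last]

lemma Xp_succ (g : Strategy Z X U) (i : Fin n) (t : ℕ) (ω : Omega T Z X W0 W) :
    Xp f0 f g i (t + 1) ω = f i t (Zp f0 f g t ω) (Xp f0 f g i t ω)
      (fun j => Up f0 f g j t ω)
      (if h : t < T then ω.2.2.2 i ⟨t, h⟩ else Classical.arbitrary (W i)) := by
  simp [Zp, Xp, Up, traj, Fin.snoc_last]

lemma hist (g : Strategy Z X U) (ω : Omega T Z X W0 W) :
    ∀ t (r : Fin (t + 1)), (traj f0 f g ω t).1 r = Zp f0 f g r ω ∧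
      (∀ j, (traj f0 f g ω t).2.1 j r = Xp f0 f g j r ω) ∧
      ((traj f0 f g ω t).2.2 r = fun k => Up f0 f g k r ω) := by
  intro t
  induction t with
  | zero =>
    intro r
    have hr : r = Fin.last 0 := Fin.ext (by omega)
    subst hr
    exact ⟨rfl, fun j => rfl, rfl⟩
  | succ t IH =>
    intro r
    refine Fin.lastCases ?_ ?_ r
    · exact ⟨rfl, fun j => rfl, rfl⟩
    · intro q
      have h1 : (traj f0 f g ω (t+1)).1 q.castSucc = (traj f0 f g ω t).1 q := by
        simp [traj, Fin.snoc_castSucc]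
      have h2 : ∀ j, (traj f0 f g ω (t+1)).2.1 j q.castSucc = (traj f0 f g ω t).2.1 j q := by
        intro j; simp [traj, Fin.snoc_castSucc]
      have h3 : (traj f0 f g ω (t+1)).2.2 q.castSucc = (traj f0 f g ω t).2.2 q := by
        simp [traj, Fin.snoc_castSucc]
      refine ⟨?_, fun j => ?_, ?_⟩
      · rw [h1]; simpa using (IH q).1
      · rw [h2]; simpa using (IH q).2.1 j
      · rw [h3]; simpa using (IH q).2.2

lemma Up_eq (g : Strategy Z X U) (j : Fin n) (t : ℕ) (ω : Omega T Z X W0 W) :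
    Up f0 f g j t ω = g j t (fun r => Zp f0 f g r ω) (fun r => Xp f0 f g j r ω)
      (fun r k => Up f0 f g k r ω) := by
  have h := hist f0 f g ω t (Fin.last t)
  cases t with
  | zero =>
    show (traj f0 f g ω 0).2.2 (Fin.last 0) j = _
    have e1 : (fun (r : Fin 1) => Zp f0 f g r ω) = fun _ => ω.1 := by
      funext r
      have : r = (0 : Fin 1) := Fin.ext (by omega)
      subst this; rfl
    have e2 : (fun (r : Fin 1) => Xp f0 f g j r ω) = fun _ => ω.2.1 j := by
      funext r
      have : r = (0 : Fin 1) := Fin.ext (by omega)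
      subst this; rfl
    have e3 : (fun (r : Fin 0) (k : Fin n) => Up f0 f g k r ω) = fun r => r.elim0 := by
      funext r; exact r.elim0
    rw [e1, e2, e3]
    rfl
  | succ t =>
    have hlast : Up f0 f g j (t+1) ω
        = g j (t+1) (traj f0 f g ω (t+1)).1 ((traj f0 f g ω (t+1)).2.1 j)
            (traj f0 f g ω t).2.2 := by
      show (traj f0 f g ω (t+1)).2.2 (Fin.last (t+1)) j = _
      simp [traj, Fin.snoc_last]
    rw [hlast]
    congr 1
    · funext r; exact (hist f0 f g ω (t+1) r).1
    · funext r; exact (hist f0 f g ω (t+1) r).2.1 j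
    · funext r
      have h3 : (traj f0 f g ω (t+1)).2.2 r.castSucc = (traj f0 f g ω t).2.2 r := by
        simp [traj, Fin.snoc_castSucc]
      have := (hist f0 f g ω (t+1) r.castSucc).2.2
      rw [h3] at this
      rw [this]
      simp

end Aux

section Aux2
set_option linter.unusedSectionVars false

/-- Processes depend on the strategy only at earlier (resp. current) times. -/
lemma strat_cong (g₁ g₂ : Strategy Z X U) (ω : Omega T Z X W0 W) :
    ∀ t, ((∀ j r, r < t → g₁ j r = g₂ j r) →
        Zp f0 f g₁ t ω = Zp f0 f g₂ t ω ∧ ∀ j, Xp f0 f g₁ j t ω = Xp f0 f g₂ j t ω) ∧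
      ((∀ j r, r ≤ t → g₁ j r = g₂ j r) → ∀ j, Up f0 f g₁ j t ω = Up f0 f g₂ j t ω) := by
  intro t
  induction t using Nat.strong_induction_on with
  | _ t IH =>
    have hst : (∀ j r, r < t → g₁ j r = g₂ j r) →
        Zp f0 f g₁ t ω = Zp f0 f g₂ t ω ∧ ∀ j, Xp f0 f g₁ j t ω = Xp f0 f g₂ j t ω := by
      intro h
      match t with
      | 0 => exact ⟨rfl, fun j => rfl⟩
      | t + 1 =>
        have hZ := ((IH t (Nat.lt_succ_self t)).1 (fun j r hr => h j r (hr.trans (Nat.lt_succ_self t)))).1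
        have hX := ((IH t (Nat.lt_succ_self t)).1 (fun j r hr => h j r (hr.trans (Nat.lt_succ_self t)))).2
        have hU := (IH t (Nat.lt_succ_self t)).2 (fun j r hr => h j r (Nat.lt_succ_of_le hr))
        constructor
        · rw [Zp_succ, Zp_succ, hZ]
          congr 1
          funext j; exact hU j
        · intro j
          rw [Xp_succ, Xp_succ, hZ, hX j]
          congr 1
          funext k; exact hU k
    refine ⟨hst, ?_⟩
    intro h j
    have hstates : ∀ r : ℕ, r ≤ t →
        Zp f0 f g₁ r ω = Zp f0 f g₂ r ω ∧ ∀ j, Xp f0 f g₁ j r ω = Xp f0 f g₂ j r ω := by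
      intro r hr
      rcases lt_or_eq_of_le hr with hr' | hr'
      · exact (IH r hr').1 (fun j r' hr'' => h j r' (le_of_lt (hr''.trans_le hr)))
      · subst hr'; exact hst (fun j r' hr'' => h j r' hr''.le)
    have hacts : ∀ r : ℕ, r < t → ∀ k, Up f0 f g₁ k r ω = Up f0 f g₂ k r ω := by
      intro r hr k
      exact (IH r hr).2 (fun j r' hr' => h j r' (hr'.trans hr.le)) k
    rw [Up_eq, Up_eq, h j t le_rfl]
    congr 1
    · funext r; exact (hstates r (Nat.lt_succ_iff.mp r.isLt)).1
    · funext r; exact (hstates r (Nat.lt_succ_iff.mp r.isLt)).2 j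
    · funext r k; exact hacts r r.isLt k

/-- If `g₂` agrees with `g₁` except possibly at station `i`, time `s`, and at that point
produces the same action along the realized `g₁`-trajectory, then all processes agree. -/
lemma point_cong (g₁ g₂ : Strategy Z X U) (i : Fin n) (s : ℕ) (ω : Omega T Z X W0 W)
    (hne : ∀ j, j ≠ i → g₁ j = g₂ j) (hti : ∀ t, t ≠ s → g₁ i t = g₂ i t)
    (hs : g₂ i s (fun r => Zp f0 f g₁ r ω) (fun r => Xp f0 f g₁ i r ω)
        (fun r k => Up f0 f g₁ k r ω) = Up f0 f g₁ i s ω) :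
    ∀ t, (Zp f0 f g₁ t ω = Zp f0 f g₂ t ω ∧ ∀ j, Xp f0 f g₁ j t ω = Xp f0 f g₂ j t ω) ∧
      (∀ j, Up f0 f g₁ j t ω = Up f0 f g₂ j t ω) := by
  intro t
  induction t using Nat.strong_induction_on with
  | _ t IH =>
    have hst : Zp f0 f g₁ t ω = Zp f0 f g₂ t ω ∧ ∀ j, Xp f0 f g₁ j t ω = Xp f0 f g₂ j t ω := by
      match t with
      | 0 => exact ⟨rfl, fun j => rfl⟩
      | t + 1 =>
        have hZ := ((IH t (Nat.lt_succ_self t)).1).1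
        have hX := ((IH t (Nat.lt_succ_self t)).1).2
        have hU := (IH t (Nat.lt_succ_self t)).2
        constructor
        · rw [Zp_succ, Zp_succ, hZ]
          congr 1
          funext j; exact hU j
        · intro j
          rw [Xp_succ, Xp_succ, hZ, hX j]
          congr 1
          funext k; exact hU k
    refine ⟨hst, ?_⟩
    intro j
    have hstates : ∀ r : ℕ, r ≤ t →
        Zp f0 f g₁ r ω = Zp f0 f g₂ r ω ∧ ∀ j, Xp f0 f g₁ j r ω = Xp f0 f g₂ j r ω := by
      intro r hr
      rcases lt_or_eq_of_le hr with hr' | hr'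
      · exact (IH r hr').1
      · subst hr'; exact hst
    have harg : g₂ j t (fun r => Zp f0 f g₂ r ω) (fun r => Xp f0 f g₂ j r ω)
        (fun r k => Up f0 f g₂ k r ω)
        = g₂ j t (fun r => Zp f0 f g₁ r ω) (fun r => Xp f0 f g₁ j r ω)
        (fun r k => Up f0 f g₁ k r ω) := by
      congr 1
      · funext r; exact ((hstates r (Nat.lt_succ_iff.mp r.isLt)).1).symm
      · funext r; exact ((hstates r (Nat.lt_succ_iff.mp r.isLt)).2 j).symm
      · funext r k; exact ((IH r r.isLt).2 k).symm
    by_cases hji : j = i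
    · subst hji
      by_cases hts : t = s
      · subst hts
        rw [Up_eq f0 f g₂, harg, hs]
      · rw [Up_eq f0 f g₂, harg, ← hti t hts]; exact (Up_eq f0 f g₁ j t ω)
    · rw [Up_eq f0 f g₂, harg, ← hne j hji]; exact (Up_eq f0 f g₁ j t ω)

end Aux2

section Aux3
set_option linter.unusedSectionVars false

/-- Swap the station-`i` "private past" (initial local state and local noises before time `s`)
of `a` with that of `b`. -/
def swapAt (i : Fin n) (s : ℕ) (a b : Omega T Z X W0 W) : Omega T Z X W0 W :=
  (a.1, Function.update a.2.1 i (b.2.1 i), a.2.2.1,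
    Function.update a.2.2.2 i (fun t : Fin T => if (t : ℕ) < s then b.2.2.2 i t else a.2.2.2 i t))

lemma swapAt_fst (i : Fin n) (s : ℕ) (a b : Omega T Z X W0 W) : (swapAt i s a b).1 = a.1 := rfl

lemma swapAt_x_ne (i : Fin n) (s : ℕ) (a b : Omega T Z X W0 W) {j : Fin n} (hj : j ≠ i) :
    (swapAt i s a b).2.1 j = a.2.1 j := Function.update_of_ne hj _ _

lemma swapAt_x_eq (i : Fin n) (s : ℕ) (a b : Omega T Z X W0 W) :
    (swapAt i s a b).2.1 i = b.2.1 i := Function.update_self _ _ _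

lemma swapAt_w0 (i : Fin n) (s : ℕ) (a b : Omega T Z X W0 W) :
    (swapAt i s a b).2.2.1 = a.2.2.1 := rfl

lemma swapAt_w_ne (i : Fin n) (s : ℕ) (a b : Omega T Z X W0 W) {j : Fin n} (hj : j ≠ i) :
    (swapAt i s a b).2.2.2 j = a.2.2.2 j := Function.update_of_ne hj _ _

lemma swapAt_w_eq (i : Fin n) (s : ℕ) (a b : Omega T Z X W0 W) :
    (swapAt i s a b).2.2.2 i = fun t : Fin T => if (t : ℕ) < s then b.2.2.2 i t else a.2.2.2 i t :=
  Function.update_self _ _ _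

/-- swapping twice returns the original pair. -/
lemma swapAt_invol (i : Fin n) (s : ℕ) (a b : Omega T Z X W0 W) :
    swapAt i s (swapAt i s a b) (swapAt i s b a) = a := by
  refine Prod.ext rfl (Prod.ext ?_ (Prod.ext rfl ?_))
  · funext j
    rcases eq_or_ne j i with rfl | hj
    · show (Function.update (swapAt j s a b).2.1 j ((swapAt j s b a).2.1 j)) j = a.2.1 j
      rw [Function.update_self, swapAt_x_eq]
    · show (Function.update (swapAt i s a b).2.1 i ((swapAt i s b a).2.1 i)) j = a.2.1 j
      rw [Function.update_of_ne hj, swapAt_x_ne i s a b hj]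
  · funext j
    rcases eq_or_ne j i with rfl | hj
    · show (Function.update (swapAt j s a b).2.2.2 j
        (fun t : Fin T => if (t : ℕ) < s then (swapAt j s b a).2.2.2 j t
          else (swapAt j s a b).2.2.2 j t)) j = a.2.2.2 j
      rw [Function.update_self]
      funext t
      rw [swapAt_w_eq, swapAt_w_eq]
      by_cases ht : (t : ℕ) < s <;> simp [ht]
    · show (Function.update (swapAt i s a b).2.2.2 i
        (fun t : Fin T => if (t : ℕ) < s then (swapAt i s b a).2.2.2 i t
          else (swapAt i s a b).2.2.2 i t)) j = a.2.2.2 j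
      rw [Function.update_of_ne hj, swapAt_w_ne i s a b hj]

/-- Master lemma: up to time `s`, the swapped point follows `ω`'s trajectory on the
common/shared components and on all stations `j ≠ i`, and `ω'`'s trajectory on station `i`. -/
lemma core_master (h : Strategy Z X U) (i : Fin n) (s : ℕ) (ω ω' : Omega T Z X W0 W)
    (Hz : ∀ r, r ≤ s → Zp f0 f h r ω' = Zp f0 f h r ω)
    (Hu : ∀ r, r < s → ∀ j, Up f0 f h j r ω' = Up f0 f h j r ω) :
    ∀ t, t ≤ s →
      (Zp f0 f h t (swapAt i s ω ω') = Zp f0 f h t ω ∧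
        (∀ j, j ≠ i → Xp f0 f h j t (swapAt i s ω ω') = Xp f0 f h j t ω) ∧
        Xp f0 f h i t (swapAt i s ω ω') = Xp f0 f h i t ω') ∧
      (t < s → ∀ j, Up f0 f h j t (swapAt i s ω ω') = Up f0 f h j t ω) := by
  intro t
  induction t using Nat.strong_induction_on with
  | _ t IH =>
    intro hts
    set b := swapAt i s ω ω' with hb
    have hst : Zp f0 f h t b = Zp f0 f h t ω ∧
        (∀ j, j ≠ i → Xp f0 f h j t b = Xp f0 f h j t ω) ∧
        Xp f0 f h i t b = Xp f0 f h i t ω' := by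
      match t, hts with
      | 0, _ =>
        refine ⟨rfl, fun j hj => ?_, ?_⟩
        · show (swapAt i s ω ω').2.1 j = ω.2.1 j
          exact swapAt_x_ne i s ω ω' hj
        · show (swapAt i s ω ω').2.1 i = ω'.2.1 i
          exact swapAt_x_eq i s ω ω'
      | t + 1, hts =>
        have ht' : t < s := hts
        have hts' : t ≤ s := ht'.le
        have IHt := IH t (Nat.lt_succ_self t) hts'
        have hZ := IHt.1.1
        have hXne := IHt.1.2.1
        have hXi := IHt.1.2.2
        have hU := IHt.2 ht'
        refine ⟨?_, fun j hj => ?_, ?_⟩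
        · rw [Zp_succ, Zp_succ, hZ]
          congr 1
          · funext k; exact hU k
        · rw [Xp_succ, Xp_succ, hZ, hXne j hj]
          congr 1
          · funext k; exact hU k
          · show (if hh : t < T then (swapAt i s ω ω').2.2.2 j ⟨t, hh⟩ else _) = _
            by_cases hh : t < T
            · simp only [dif_pos hh]
              rw [swapAt_w_ne i s ω ω' hj]
            · simp only [dif_neg hh]
        · rw [Xp_succ, Xp_succ, hZ, hXi, Hz t hts']
          congr 1
          · funext k; rw [hU k, Hu t ht' k]
          · show (if hh : t < T then (swapAt i s ω ω').2.2.2 i ⟨t, hh⟩ else _) = _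
            by_cases hh : t < T
            · simp only [dif_pos hh]
              rw [swapAt_w_eq]
              simp [ht']
            · simp only [dif_neg hh]
    refine ⟨hst, ?_⟩
    intro htlt j
    -- histories up to t agree appropriately
    have hzh : ∀ r : ℕ, r ≤ t → Zp f0 f h r b = Zp f0 f h r ω := by
      intro r hr
      rcases lt_or_eq_of_le hr with hr' | hr'
      · exact ((IH r hr' (hr'.le.trans hts)).1).1
      · subst hr'; exact hst.1
    have hxh : ∀ (j : Fin n), j ≠ i → ∀ r : ℕ, r ≤ t → Xp f0 f h j r b = Xp f0 f h j r ω := by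
      intro j hj r hr
      rcases lt_or_eq_of_le hr with hr' | hr'
      · exact ((IH r hr' (hr'.le.trans hts)).1).2.1 j hj
      · subst hr'; exact hst.2.1 j hj
    have hxi : ∀ r : ℕ, r ≤ t → Xp f0 f h i r b = Xp f0 f h i r ω' := by
      intro r hr
      rcases lt_or_eq_of_le hr with hr' | hr'
      · exact ((IH r hr' (hr'.le.trans hts)).1).2.2
      · subst hr'; exact hst.2.2
    have huh : ∀ r : ℕ, r < t → ∀ k, Up f0 f h k r b = Up f0 f h k r ω := by
      intro r hr k
      exact (IH r hr (hr.le.trans hts)).2 (hr.trans htlt) k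
    by_cases hj : j = i
    · subst hj
      rw [Up_eq, ← Hu t htlt j, Up_eq f0 f h j t ω']
      congr 1
      · funext r
        rw [hzh r (Nat.lt_succ_iff.mp r.isLt)]
        exact (Hz r ((Nat.lt_succ_iff.mp r.isLt).trans hts)).symm
      · funext r; exact hxi r (Nat.lt_succ_iff.mp r.isLt)
      · funext r k
        rw [huh r r.isLt k]
        exact (Hu r (r.isLt.trans htlt) k).symm
    · rw [Up_eq, Up_eq f0 f h j t ω]
      congr 1
      · funext r; exact hzh r (Nat.lt_succ_iff.mp r.isLt)
      · funext r; exact hxh j hj r (Nat.lt_succ_iff.mp r.isLt)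
      · funext r k; exact huh r r.isLt k

end Aux3

section Aux4
set_option linter.unusedSectionVars false

/-- Invariance of a control law under changes of the local-state history off its last entry. -/
def Restr (g : Strategy Z X U) (i : Fin n) (t : ℕ) : Prop :=
  ∀ (zh : Fin (t + 1) → Z) (xh xh' : Fin (t + 1) → X i) (uh : Fin t → ∀ j, U j),
    xh (Fin.last t) = xh' (Fin.last t) → g i t zh xh uh = g i t zh xh' uh

/-- From time `s` on, the swapped point follows `ω`'s trajectory on all components, provided
the station-`i` law at `s` is constant and later laws only use the current local state. -/
lemma core_q (h : Strategy Z X U) (i : Fin n) (s : ℕ) (ω ω' : Omega T Z X W0 W)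
    (Hz : ∀ r, r ≤ s → Zp f0 f h r ω' = Zp f0 f h r ω)
    (Hu : ∀ r, r < s → ∀ j, Up f0 f h j r ω' = Up f0 f h j r ω)
    (Hx : Xp f0 f h i s ω' = Xp f0 f h i s ω)
    (Hconst : ∀ zh xh uh zh' xh' uh', h i s zh xh uh = h i s zh' xh' uh')
    (Hrestr : ∀ t, s < t → Restr h i t) :
    ∀ t, s ≤ t →
      (Zp f0 f h t (swapAt i s ω ω') = Zp f0 f h t ω ∧
        ∀ j, Xp f0 f h j t (swapAt i s ω ω') = Xp f0 f h j t ω) ∧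
      (∀ j, Up f0 f h j t (swapAt i s ω ω') = Up f0 f h j t ω) := by
  intro t
  induction t using Nat.strong_induction_on with
  | _ t IH =>
    intro hst
    set b := swapAt i s ω ω' with hb
    have hstates : Zp f0 f h t b = Zp f0 f h t ω ∧
        ∀ j, Xp f0 f h j t b = Xp f0 f h j t ω := by
      rcases lt_or_eq_of_le hst with hlt | heq
      · -- t > s, so t = t' + 1 with s ≤ t'
        match t, hlt with
        | t + 1, hlt =>
          have hst' : s ≤ t := Nat.lt_succ_iff.mp hlt
          have IHt := IH t (Nat.lt_succ_self t) hst'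
          constructor
          · rw [Zp_succ, Zp_succ, IHt.1.1]
            congr 1
            funext k; exact IHt.2 k
          · intro j
            rw [Xp_succ, Xp_succ, IHt.1.1, IHt.1.2 j]
            congr 1
            · funext k; exact IHt.2 k
            · rcases eq_or_ne j i with rfl | hj
              · by_cases hh : t < T
                · simp only [dif_pos hh]
                  rw [hb, swapAt_w_eq]
                  simp [Nat.not_lt.mpr hst']
                · simp only [dif_neg hh]
              · by_cases hh : t < T
                · simp only [dif_pos hh]
                  rw [hb, swapAt_w_ne i s ω ω' hj]
                · simp only [dif_neg hh]
      · -- t = s : use the master lemma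
        subst heq
        have hm := core_master f0 f h i s ω ω' Hz Hu s le_rfl
        refine ⟨hm.1.1, fun j => ?_⟩
        rcases eq_or_ne j i with rfl | hj
        · rw [hm.1.2.2, Hx]
        · exact hm.1.2.1 j hj
    refine ⟨hstates, ?_⟩
    intro j
    -- histories up to t
    have hzh : ∀ r : ℕ, r ≤ t → Zp f0 f h r b = Zp f0 f h r ω := by
      intro r hr
      rcases lt_or_eq_of_le hr with hr' | hr'
      · rcases le_or_gt s r with hsr | hrs
        · exact ((IH r hr' hsr).1).1
        · exact ((core_master f0 f h i s ω ω' Hz Hu) r hrs.le).1.1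
      · subst hr'; exact hstates.1
    have hxh : ∀ (k : Fin n), k ≠ i → ∀ r : ℕ, r ≤ t → Xp f0 f h k r b = Xp f0 f h k r ω := by
      intro k hk r hr
      rcases lt_or_eq_of_le hr with hr' | hr'
      · rcases le_or_gt s r with hsr | hrs
        · exact ((IH r hr' hsr).1).2 k
        · exact ((core_master f0 f h i s ω ω' Hz Hu) r hrs.le).1.2.1 k hk
      · subst hr'; exact hstates.2 k
    have huh : ∀ r : ℕ, r < t → ∀ k, Up f0 f h k r b = Up f0 f h k r ω := by
      intro r hr k
      rcases le_or_gt s r with hsr | hrs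
      · exact (IH r hr hsr).2 k
      · exact ((core_master f0 f h i s ω ω' Hz Hu) r hrs.le).2 hrs k
    rcases eq_or_ne j i with rfl | hj
    · rcases lt_or_eq_of_le hst with hlt | heq
      · -- t > s : use Hrestr
        rw [Up_eq, Up_eq f0 f h j t ω]
        have hzz : (fun r : Fin (t+1) => Zp f0 f h r b) = fun r : Fin (t+1) => Zp f0 f h r ω := by
          funext r; exact hzh r (Nat.lt_succ_iff.mp r.isLt)
        have huu : (fun (r : Fin t) (k : Fin n) => Up f0 f h k r b)
            = fun (r : Fin t) (k : Fin n) => Up f0 f h k r ω := by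
          funext r k; exact huh r r.isLt k
        rw [hzz, huu]
        apply Hrestr t hlt
        simp only [Fin.val_last]
        exact hstates.2 j
      · subst heq
        rw [Up_eq, Up_eq f0 f h j s ω]
        apply Hconst
    · rw [Up_eq, Up_eq f0 f h j t ω]
      congr 1
      · funext r; exact hzh r (Nat.lt_succ_iff.mp r.isLt)
      · funext r; exact hxh j hj r (Nat.lt_succ_iff.mp r.isLt)
      · funext r k; exact huh r r.isLt k

end Aux4

section Aux5
set_option linter.unusedSectionVars false

lemma weight_nonneg (PZ : Z → ℝ) (PX : ∀ i, Z → X i → ℝ) (PW0 : W0 → ℝ) (PW : ∀ i, W i → ℝ)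
    (hPZ : IsLaw PZ) (hPX : ∀ i z, IsLaw (PX i z)) (hPW0 : IsLaw PW0) (hPW : ∀ i, IsLaw (PW i))
    (ω : Omega T Z X W0 W) : 0 ≤ weight PZ PX PW0 PW ω := by
  unfold weight
  have h1 : (0:ℝ) ≤ PZ ω.1 := hPZ.1 _
  have h2 : (0:ℝ) ≤ ∏ i, PX i ω.1 (ω.2.1 i) := Finset.prod_nonneg fun i _ => (hPX i ω.1).1 _
  have h3 : (0:ℝ) ≤ ∏ t, PW0 (ω.2.2.1 t) := Finset.prod_nonneg fun t _ => hPW0.1 _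
  have h4 : (0:ℝ) ≤ ∏ i, ∏ t, PW i (ω.2.2.2 i t) :=
    Finset.prod_nonneg fun i _ => Finset.prod_nonneg fun t _ => (hPW i).1 _
  positivity

lemma weight_swap (PZ : Z → ℝ) (PX : ∀ i, Z → X i → ℝ) (PW0 : W0 → ℝ) (PW : ∀ i, W i → ℝ)
    (i : Fin n) (s : ℕ) (a b : Omega T Z X W0 W) (hab : b.1 = a.1) :
    weight PZ PX PW0 PW (swapAt i s a b) * weight PZ PX PW0 PW (swapAt i s b a)
      = weight PZ PX PW0 PW a * weight PZ PX PW0 PW b := by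
  unfold weight
  rw [swapAt_fst, swapAt_fst, swapAt_w0, swapAt_w0, hab]
  have e2 : (∏ j, PX j a.1 ((swapAt i s a b).2.1 j)) * (∏ j, PX j a.1 ((swapAt i s b a).2.1 j))
      = (∏ j, PX j a.1 (a.2.1 j)) * (∏ j, PX j a.1 (b.2.1 j)) := by
    rw [← Finset.prod_mul_distrib, ← Finset.prod_mul_distrib]
    refine Finset.prod_congr rfl fun j _ => ?_
    rcases eq_or_ne j i with rfl | hj
    · rw [swapAt_x_eq, swapAt_x_eq, mul_comm]
    · rw [swapAt_x_ne i s a b hj, swapAt_x_ne i s b a hj]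
  have e4 : (∏ j, ∏ t, PW j ((swapAt i s a b).2.2.2 j t))
        * (∏ j, ∏ t, PW j ((swapAt i s b a).2.2.2 j t))
      = (∏ j, ∏ t, PW j (a.2.2.2 j t)) * (∏ j, ∏ t, PW j (b.2.2.2 j t)) := by
    rw [← Finset.prod_mul_distrib, ← Finset.prod_mul_distrib]
    refine Finset.prod_congr rfl fun j _ => ?_
    rw [← Finset.prod_mul_distrib, ← Finset.prod_mul_distrib]
    refine Finset.prod_congr rfl fun t _ => ?_
    rcases eq_or_ne j i with rfl | hj
    · rw [swapAt_w_eq, swapAt_w_eq]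
      by_cases ht : (t : ℕ) < s
      · simp only [if_pos ht]; ring
      · simp only [if_neg ht]
    · rw [swapAt_w_ne i s a b hj, swapAt_w_ne i s b a hj]
  calc PZ a.1 * (∏ j, PX j a.1 ((swapAt i s a b).2.1 j)) * (∏ t, PW0 (a.2.2.1 t)) *
          (∏ j, ∏ t, PW j ((swapAt i s a b).2.2.2 j t)) *
        (PZ a.1 * (∏ j, PX j a.1 ((swapAt i s b a).2.1 j)) * (∏ t, PW0 (b.2.2.1 t)) *
          (∏ j, ∏ t, PW j ((swapAt i s b a).2.2.2 j t)))
      = (PZ a.1 * PZ a.1) * ((∏ t, PW0 (a.2.2.1 t)) * (∏ t, PW0 (b.2.2.1 t))) *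
          ((∏ j, PX j a.1 ((swapAt i s a b).2.1 j)) * (∏ j, PX j a.1 ((swapAt i s b a).2.1 j))) *
          ((∏ j, ∏ t, PW j ((swapAt i s a b).2.2.2 j t)) *
            (∏ j, ∏ t, PW j ((swapAt i s b a).2.2.2 j t))) := by ring
    _ = (PZ a.1 * PZ a.1) * ((∏ t, PW0 (a.2.2.1 t)) * (∏ t, PW0 (b.2.2.1 t))) *
          ((∏ j, PX j a.1 (a.2.1 j)) * (∏ j, PX j a.1 (b.2.1 j))) *
          ((∏ j, ∏ t, PW j (a.2.2.2 j t)) * (∏ j, ∏ t, PW j (b.2.2.2 j t))) := by rw [e2, e4]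
    _ = _ := by ring

end Aux5

section Aux6
set_option linter.unusedSectionVars false
set_option maxHeartbeats 1000000

variable (PZ : Z → ℝ) (PX : ∀ i, Z → X i → ℝ) (PW0 : W0 → ℝ) (PW : ∀ i, W i → ℝ)

lemma one_step
    (hPZ : IsLaw PZ) (hPX : ∀ i z, IsLaw (PX i z)) (hPW0 : IsLaw PW0) (hPW : ∀ i, IsLaw (PW i))
    (c : ℕ → Z → (∀ i, X i) → (∀ i, U i) → ℝ)
    (g : Strategy Z X U) (i : Fin n) (s : ℕ)
    (hres : ∀ t, s < t → Restr g i t) :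
    ∃ g' : Strategy Z X U, (∀ j, j ≠ i → g' j = g j) ∧ (∀ t, t ≠ s → g' i t = g i t) ∧
      Restr g' i s ∧
      J f0 f c (weight (T := T) PZ PX PW0 PW) g' ≤ J f0 f c (weight (T := T) PZ PX PW0 PW) g := by
  classical
  by_cases hsT : s < T
  case neg =>
    -- times ≥ T do not influence the cost
    refine ⟨Function.update g i
      (fun t => if t = s then (fun zh xh uh => g i t zh (fun _ => xh (Fin.last t)) uh)
        else g i t), ?_, ?_, ?_, ?_⟩
    · intro j hj; exact Function.update_of_ne hj _ _
    · intro t ht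
      erw [Function.update_self]
      simp [ht]
    · intro zh xh xh' uh hlast
      have hup : ∀ (xh : Fin (s+1) → X i),
          Function.update g i (fun t => if t = s then
            (fun zh xh uh => g i t zh (fun _ => xh (Fin.last t)) uh) else g i t) i s zh xh uh
          = g i s zh (fun _ => xh (Fin.last s)) uh := by
        intro xh
        erw [Function.update_self]
        simp
      rw [hup xh, hup xh', hlast]
    · apply le_of_eq
      unfold J
      refine Finset.sum_congr rfl fun ω _ => ?_
      congr 1
      refine Finset.sum_congr rfl fun t ht => ?_
      have ht' : t < T := Finset.mem_range.mp ht
      have hagree : ∀ (j : Fin n) (r : ℕ), r ≤ t →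
          Function.update g i (fun t => if t = s then
            (fun zh xh uh => g i t zh (fun _ => xh (Fin.last t)) uh) else g i t) j r = g j r := by
        intro j r hr
        rcases eq_or_ne j i with rfl | hj
        · erw [Function.update_self]
          have : r ≠ s := by omega
          simp [this]
        · erw [Function.update_of_ne hj]
      have hsc := strat_cong f0 f
        (Function.update g i (fun t => if t = s then
          (fun zh xh uh => g i t zh (fun _ => xh (Fin.last t)) uh) else g i t)) g ω t
      have hZ := (hsc.1 (fun j r hr => hagree j r hr.le)).1
      have hX := (hsc.1 (fun j r hr => hagree j r hr.le)).2
      have hU := hsc.2 hagree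
      rw [hZ]
      congr 1
      · funext j; exact hX j
      · funext j; exact hU j
  case pos =>
  set μ := weight (T := T) PZ PX PW0 PW with hμdef
  have hμ0 : ∀ ω, 0 ≤ μ ω := fun ω => weight_nonneg PZ PX PW0 PW hPZ hPX hPW0 hPW ω
  -- information maps
  set Cm : Omega T Z X W0 W → (Fin (s+1) → Z) × X i × (Fin s → ∀ j, U j) :=
    fun ω => (fun r => Zp f0 f g r ω, Xp f0 f g i s ω, fun r => fun k => Up f0 f g k r ω)
    with hCmdef
  set Dm : Omega T Z X W0 W → (Fin (s+1) → X i) := fun ω r => Xp f0 f g i r ω with hDmdef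
  -- strategy with station i's stage-s action replaced by the constant u
  set gm : U i → Strategy Z X U := fun u => Function.update g i
    (fun t => if t = s then (fun _ _ _ => u) else g i t) with hgmdef
  have hgmne : ∀ u j, j ≠ i → gm u j = g j := by
    intro u j hj; rw [hgmdef]; exact Function.update_of_ne hj _ _
  have hgmti : ∀ u t, t ≠ s → gm u i t = g i t := by
    intro u t ht; rw [hgmdef]; beta_reduce; erw [Function.update_self]; simp [ht]
  have hgms : ∀ u zh xh uh, gm u i s zh xh uh = u := by
    intro u zh xh uh; rw [hgmdef]; beta_reduce; erw [Function.update_self]; simp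
  -- future cost under the stage-s intervention u
  set F : Omega T Z X W0 W → U i → ℝ := fun ω u => ∑ t ∈ Finset.Ico s T,
    c t (Zp f0 f (gm u) t ω) (fun j => Xp f0 f (gm u) j t ω) (fun j => Up f0 f (gm u) j t ω)
    with hFdef
  -- transfer of processes up to stage s between g and any strategy agreeing off (i,s)
  have hB : ∀ (h : Strategy Z X U), (∀ j, j ≠ i → h j = g j) → (∀ t, t ≠ s → h i t = g i t) →
      ∀ ω : Omega T Z X W0 W, (∀ r : ℕ, r ≤ s → (Zp f0 f h r ω = Zp f0 f g r ω ∧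
          ∀ j, Xp f0 f h j r ω = Xp f0 f g j r ω)) ∧
        (∀ r : ℕ, r < s → ∀ j, Up f0 f h j r ω = Up f0 f g j r ω) := by
    intro h h1 h2 ω
    constructor
    · intro r hr
      refine (strat_cong f0 f h g ω r).1 ?_
      intro j r' hr'
      rcases eq_or_ne j i with rfl | hj
      · exact h2 r' (by omega)
      · rw [h1 j hj]
    · intro r hr j
      refine (strat_cong f0 f h g ω r).2 ?_ j
      intro k r' hr'
      rcases eq_or_ne k i with rfl | hk
      · exact h2 r' (by omega)
      · rw [h1 k hk]
  -- pointwise equality of processes between g and gm (realized action)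
  have hpt : ∀ (u : U i) (ω : Omega T Z X W0 W), u = Up f0 f g i s ω →
      ∀ t, (Zp f0 f g t ω = Zp f0 f (gm u) t ω ∧
        ∀ j, Xp f0 f g j t ω = Xp f0 f (gm u) j t ω) ∧
        (∀ j, Up f0 f g j t ω = Up f0 f (gm u) j t ω) := by
    intro u ω hu
    apply point_cong f0 f g (gm u) i s ω
    · intro j hj; exact (hgmne u j hj).symm
    · intro t ht; exact (hgmti u t ht).symm
    · rw [hgms]; exact hu
  have hreal : ∀ ω : Omega T Z X W0 W,
      g i s (Cm ω).1 (Dm ω) (Cm ω).2.2 = Up f0 f g i s ω := by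
    intro ω
    simp only [hCmdef, hDmdef]
    exact (Up_eq f0 f g i s ω).symm
  -- decomposition of J g
  have hJg : J f0 f c μ g = ∑ ω : Omega T Z X W0 W, μ ω *
      ((∑ t ∈ Finset.range s, c t (Zp f0 f g t ω) (fun j => Xp f0 f g j t ω)
        (fun j => Up f0 f g j t ω)) + F ω (g i s (Cm ω).1 (Dm ω) (Cm ω).2.2)) := by
    unfold J
    refine Finset.sum_congr rfl fun ω _ => ?_
    congr 1
    rw [Finset.range_eq_Ico, ← Finset.sum_Ico_consecutive _ (Nat.zero_le s) (le_of_lt hsT),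
      ← Finset.range_eq_Ico]
    congr 1
    rw [hreal ω]
    simp only [hFdef]
    refine Finset.sum_congr rfl fun t ht => ?_
    have h := hpt (Up f0 f g i s ω) ω rfl t
    rw [h.1.1]
    congr 1
    · funext j; exact h.1.2 j
    · funext j; exact h.2 j
  -- cell sums
  set Sf : (((Fin (s+1) → Z) × X i × (Fin s → ∀ j, U j)) × (Fin (s+1) → X i)) → U i → ℝ :=
    fun p u => ∑ ω : Omega T Z X W0 W, if Cm ω = p.1 ∧ Dm ω = p.2 then μ ω * F ω u else 0
    with hSfdef
  set Nf : (((Fin (s+1) → Z) × X i × (Fin s → ∀ j, U j)) × (Fin (s+1) → X i)) → ℝ :=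
    fun p => ∑ ω : Omega T Z X W0 W, if Cm ω = p.1 ∧ Dm ω = p.2 then μ ω else 0
    with hNfdef
  have hcond : ∀ (ω : Omega T Z X W0 W)
      (p : ((Fin (s+1) → Z) × X i × (Fin s → ∀ j, U j)) × (Fin (s+1) → X i)),
      (Cm ω = p.1 ∧ Dm ω = p.2) = ((Cm ω, Dm ω) = p) := by
    intro ω p; apply propext; constructor
    · rintro ⟨h1, h2⟩; exact Prod.ext h1 h2
    · intro h; exact ⟨congrArg Prod.fst h, congrArg Prod.snd h⟩
  have hgroup : ∀ γ : ((Fin (s+1) → Z) × X i × (Fin s → ∀ j, U j)) → (Fin (s+1) → X i) → U i,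
      ∑ ω : Omega T Z X W0 W, μ ω * F ω (γ (Cm ω) (Dm ω))
        = ∑ p : (((Fin (s+1) → Z) × X i × (Fin s → ∀ j, U j)) × (Fin (s+1) → X i)),
            Sf p (γ p.1 p.2) := by
    intro γ
    symm
    simp only [hSfdef]
    rw [Finset.sum_comm]
    refine Finset.sum_congr rfl fun ω _ => ?_
    simp only [hcond ω]
    rw [Finset.sum_eq_single (Cm ω, Dm ω)]
    · simp
    · intro p _ hp
      rw [if_neg (fun h => hp h.symm)]
    · intro h; exact absurd (Finset.mem_univ _) h
  -- common-information equality between two cell members, in terms of g-processes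
  have hcellhyp : ∀ a b : Omega T Z X W0 W, Cm a = Cm b →
      (∀ r : ℕ, r ≤ s → Zp f0 f g r b = Zp f0 f g r a) ∧
      (∀ r : ℕ, r < s → ∀ j, Up f0 f g j r b = Up f0 f g j r a) ∧
      Xp f0 f g i s b = Xp f0 f g i s a := by
    intro a b hab
    have hab' := hab
    simp only [hCmdef] at hab'
    refine ⟨?_, ?_, ?_⟩
    · intro r hr
      exact (congrFun (congrArg Prod.fst hab') ⟨r, Nat.lt_succ_of_le hr⟩).symm
    · intro r hr j
      have h2 := congrFun (congrArg (fun q => q.2.2) hab') ⟨r, hr⟩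
      exact (congrFun h2 j).symm
    · exact (congrArg (fun q => q.2.1) hab').symm
  have hμswap : ∀ a b : Omega T Z X W0 W, Cm a = Cm b →
      μ (swapAt i s a b) * μ (swapAt i s b a) = μ a * μ b := by
    intro a b hab
    have hz : Zp f0 f g 0 b = Zp f0 f g 0 a := (hcellhyp a b hab).1 0 (Nat.zero_le s)
    rw [hμdef]
    exact weight_swap PZ PX PW0 PW i s a b hz
  have hcellmap : ∀ (a b : Omega T Z X W0 W) cc (d₂ : Fin (s+1) → X i),
      Cm a = cc → Cm b = cc → Dm b = d₂ →
      Cm (swapAt i s a b) = cc ∧ Dm (swapAt i s a b) = d₂ := by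
    intro a b cc d₂ hca hcb hdb
    have hh := hcellhyp a b (hca.trans hcb.symm)
    have hm := core_master f0 f g i s a b hh.1 hh.2.1
    constructor
    · rw [← hca]
      simp only [hCmdef]
      refine Prod.ext ?_ (Prod.ext ?_ ?_)
      · funext r
        exact (hm r (Nat.lt_succ_iff.mp r.isLt)).1.1
      · show Xp f0 f g i s (swapAt i s a b) = Xp f0 f g i s a
        rw [(hm s le_rfl).1.2.2]
        exact hh.2.2
      · funext r k
        exact (hm r r.isLt.le).2 r.isLt k
    · rw [← hdb]
      simp only [hDmdef]
      funext r
      exact (hm r (Nat.lt_succ_iff.mp r.isLt)).1.2.2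
  have hFmap : ∀ (u : U i) (a b : Omega T Z X W0 W), Cm a = Cm b →
      F (swapAt i s b a) u = F b u := by
    intro u a b hab
    have hh := hcellhyp b a hab.symm
    have htr := fun (ω : Omega T Z X W0 W) => hB (gm u) (hgmne u) (hgmti u) ω
    have Hz : ∀ r : ℕ, r ≤ s → Zp f0 f (gm u) r a = Zp f0 f (gm u) r b := by
      intro r hr
      rw [((htr a).1 r hr).1, ((htr b).1 r hr).1]
      exact hh.1 r hr
    have Hu : ∀ r : ℕ, r < s → ∀ j, Up f0 f (gm u) j r a = Up f0 f (gm u) j r b := by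
      intro r hr j
      rw [(htr a).2 r hr j, (htr b).2 r hr j]
      exact hh.2.1 r hr j
    have Hx : Xp f0 f (gm u) i s a = Xp f0 f (gm u) i s b := by
      rw [((htr a).1 s le_rfl).2 i, ((htr b).1 s le_rfl).2 i]
      exact hh.2.2
    have hq := core_q f0 f (gm u) i s b a Hz Hu Hx
      (by intro zh xh uh zh' xh' uh'; rw [hgms, hgms])
      (by intro t ht zh xh xh' uh hl
          rw [hgmti u t (Nat.ne_of_gt ht)]
          exact hres t ht zh xh xh' uh hl)
    simp only [hFdef]
    refine Finset.sum_congr rfl fun t ht => ?_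
    have hts : s ≤ t := (Finset.mem_Ico.mp ht).1
    rw [(hq t hts).1.1]
    congr 1
    · funext j; exact (hq t hts).1.2 j
    · funext j; exact (hq t hts).2 j
  -- the exchange identity
  have hkey : ∀ cc (d d' : Fin (s+1) → X i) (u : U i),
      Nf (cc, d') * Sf (cc, d) u = Nf (cc, d) * Sf (cc, d') u := by
    intro cc d d' u
    have hinv : Function.Involutive
        (fun q : Omega T Z X W0 W × Omega T Z X W0 W =>
          (swapAt i s q.1 q.2, swapAt i s q.2 q.1)) := by
      intro p
      exact Prod.ext (swapAt_invol i s p.1 p.2) (swapAt_invol i s p.2 p.1)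
    have hprod : ∀ (d₁ d₂ : Fin (s+1) → X i),
        Nf (cc, d₁) * Sf (cc, d₂) u = ∑ p : Omega T Z X W0 W × Omega T Z X W0 W,
          (if Cm p.1 = cc ∧ Dm p.1 = d₁ then μ p.1 else 0) *
          (if Cm p.2 = cc ∧ Dm p.2 = d₂ then μ p.2 * F p.2 u else 0) := by
      intro d₁ d₂
      simp only [hNfdef, hSfdef]
      rw [Finset.sum_mul_sum]
      exact (Fintype.sum_prod_type
        (fun p : Omega T Z X W0 W × Omega T Z X W0 W =>
          (if Cm p.1 = cc ∧ Dm p.1 = d₁ then μ p.1 else 0) *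
          (if Cm p.2 = cc ∧ Dm p.2 = d₂ then μ p.2 * F p.2 u else 0))).symm
    rw [hprod d' d, hprod d d']
    refine Eq.trans (Equiv.sum_comp hinv.toPerm _).symm (Finset.sum_congr rfl fun p _ => ?_)
    show (if Cm (swapAt i s p.1 p.2) = cc ∧ Dm (swapAt i s p.1 p.2) = d' then
        μ (swapAt i s p.1 p.2) else 0) *
      (if Cm (swapAt i s p.2 p.1) = cc ∧ Dm (swapAt i s p.2 p.1) = d then
        μ (swapAt i s p.2 p.1) * F (swapAt i s p.2 p.1) u else 0)
      = (if Cm p.1 = cc ∧ Dm p.1 = d then μ p.1 else 0) *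
        (if Cm p.2 = cc ∧ Dm p.2 = d' then μ p.2 * F p.2 u else 0)
    obtain ⟨a, b⟩ := p
    by_cases hc : (Cm a = cc ∧ Dm a = d) ∧ (Cm b = cc ∧ Dm b = d')
    · obtain ⟨⟨hca, hda⟩, hcb, hdb⟩ := hc
      have hm1 := hcellmap a b cc d' hca hcb hdb
      have hm2 := hcellmap b a cc d hcb hca hda
      rw [if_pos hm1, if_pos hm2, if_pos ⟨hca, hda⟩, if_pos ⟨hcb, hdb⟩,
        hFmap u a b (hca.trans hcb.symm)]
      have hμ := hμswap a b (hca.trans hcb.symm)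
      calc μ (swapAt i s a b) * (μ (swapAt i s b a) * F b u)
          = (μ (swapAt i s a b) * μ (swapAt i s b a)) * F b u := by ring
        _ = (μ a * μ b) * F b u := by rw [hμ]
        _ = μ a * (μ b * F b u) := by ring
    · have hnc : ¬((Cm (swapAt i s a b) = cc ∧ Dm (swapAt i s a b) = d') ∧
          (Cm (swapAt i s b a) = cc ∧ Dm (swapAt i s b a) = d)) := by
        rintro ⟨⟨hca', hda'⟩, hcb', hdb'⟩
        apply hc
        have hm1 := hcellmap (swapAt i s a b) (swapAt i s b a) cc d hca' hcb' hdb'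
        have hm2 := hcellmap (swapAt i s b a) (swapAt i s a b) cc d' hcb' hca' hda'
        rw [swapAt_invol i s a b] at hm1
        rw [swapAt_invol i s b a] at hm2
        exact ⟨hm1, hm2⟩
      have l0 : (if Cm (swapAt i s a b) = cc ∧ Dm (swapAt i s a b) = d' then
          μ (swapAt i s a b) else 0) *
        (if Cm (swapAt i s b a) = cc ∧ Dm (swapAt i s b a) = d then
          μ (swapAt i s b a) * F (swapAt i s b a) u else 0) = 0 := by
        rcases not_and_or.mp hnc with h | h
        · rw [if_neg h, zero_mul]
        · rw [if_neg h, mul_zero]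
      have r0 : (if Cm a = cc ∧ Dm a = d then μ a else 0) *
          (if Cm b = cc ∧ Dm b = d' then μ b * F b u else 0) = 0 := by
        rcases not_and_or.mp hc with h | h
        · rw [if_neg h, zero_mul]
        · rw [if_neg h, mul_zero]
      rw [l0, r0]
  -- nonnegativity of cell masses
  have hNnn : ∀ p, 0 ≤ Nf p := by
    intro p
    rw [hNfdef]
    refine Finset.sum_nonneg fun ω _ => ?_
    by_cases h : Cm ω = p.1 ∧ Dm ω = p.2
    · rw [if_pos h]; exact hμ0 ω
    · rw [if_neg h]
  -- choose a minimizing constant action for every common-information realization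
  have hmin : ∀ cc : (Fin (s+1) → Z) × X i × (Fin s → ∀ j, U j),
      ∃ u : U i, ∀ v : U i,
        (∑ d : Fin (s+1) → X i, Sf (cc, d) u) ≤ ∑ d : Fin (s+1) → X i, Sf (cc, d) v := by
    intro cc
    obtain ⟨u, -, hu⟩ := Finset.exists_min_image Finset.univ
      (fun u : U i => ∑ d : Fin (s+1) → X i, Sf (cc, d) u)
      ⟨Classical.arbitrary (U i), Finset.mem_univ _⟩
    exact ⟨u, fun v => hu v (Finset.mem_univ v)⟩
  set gbar : ((Fin (s+1) → Z) × X i × (Fin s → ∀ j, U j)) → U i :=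
    fun cc => Classical.choose (hmin cc) with hgbardef
  have hgbar : ∀ cc v, (∑ d : Fin (s+1) → X i, Sf (cc, d) (gbar cc))
      ≤ ∑ d : Fin (s+1) → X i, Sf (cc, d) v :=
    fun cc => Classical.choose_spec (hmin cc)
  -- the improved strategy
  set g' : Strategy Z X U := Function.update g i
    (fun t => if ht : t = s then
        (fun zh xh uh => gbar (fun r => zh (Fin.cast (by rw [ht]) r), xh (Fin.last t),
          fun r => uh (Fin.cast (by rw [ht]) r)))
      else g i t) with hg'def
  have hg'ne : ∀ j, j ≠ i → g' j = g j := by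
    intro j hj; rw [hg'def]; exact Function.update_of_ne hj _ _
  have hgi : g' i = (fun t => if ht : t = s then
      (fun zh xh uh => gbar (fun r => zh (Fin.cast (by rw [ht]) r), xh (Fin.last t),
        fun r => uh (Fin.cast (by rw [ht]) r)))
    else g i t) := by
    rw [hg'def]; exact Function.update_self _ _ _
  have hg'ti : ∀ t, t ≠ s → g' i t = g i t := by
    intro t ht
    simp only [hgi]
    rw [dif_neg ht]
  have hg's : ∀ zh xh uh, g' i s zh xh uh = gbar (zh, xh (Fin.last s), uh) := by
    intro zh xh uh
    simp only [hgi]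
    rw [dif_pos trivial]
  have hres' : Restr g' i s := by
    intro zh xh xh' uh hl
    rw [hg's, hg's, hl]
  -- decomposition of J g'
  have hJg' : J f0 f c μ g' = ∑ ω : Omega T Z X W0 W, μ ω *
      ((∑ t ∈ Finset.range s, c t (Zp f0 f g t ω) (fun j => Xp f0 f g j t ω)
        (fun j => Up f0 f g j t ω)) + F ω (gbar (Cm ω))) := by
    unfold J
    refine Finset.sum_congr rfl fun ω _ => ?_
    congr 1
    rw [Finset.range_eq_Ico, ← Finset.sum_Ico_consecutive _ (Nat.zero_le s) (le_of_lt hsT),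
      ← Finset.range_eq_Ico]
    congr 1
    · refine Finset.sum_congr rfl fun t ht => ?_
      have ht' : t < s := Finset.mem_range.mp ht
      have hagree : ∀ (j : Fin n) (r : ℕ), r ≤ t → g' j r = g j r := by
        intro j r hr
        rcases eq_or_ne j i with rfl | hj
        · exact hg'ti r (by omega)
        · rw [hg'ne j hj]
      have hsc := strat_cong f0 f g' g ω t
      have hZ := (hsc.1 (fun j r hr => hagree j r hr.le)).1
      have hX := (hsc.1 (fun j r hr => hagree j r hr.le)).2
      have hU := hsc.2 hagree
      rw [hZ]
      congr 1
      · funext j; exact hX j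
      · funext j; exact hU j
    · have htr := hB (gm (gbar (Cm ω))) (hgmne _) (hgmti _) ω
      have hs0 : g' i s (fun r => Zp f0 f (gm (gbar (Cm ω))) r ω)
          (fun r => Xp f0 f (gm (gbar (Cm ω))) i r ω)
          (fun r k => Up f0 f (gm (gbar (Cm ω))) k r ω)
          = Up f0 f (gm (gbar (Cm ω))) i s ω := by
        rw [Up_eq, hgms, hg's]
        congr 1
        simp only [hCmdef]
        refine Prod.ext ?_ (Prod.ext ?_ ?_)
        · funext r
          exact (htr.1 r (Nat.lt_succ_iff.mp r.isLt)).1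
        · show Xp f0 f (gm (gbar (Cm ω))) i (Fin.last s : Fin (s+1)) ω = Xp f0 f g i s ω
          have : ((Fin.last s : Fin (s+1)) : ℕ) = s := Fin.val_last s
          rw [this]
          exact (htr.1 s le_rfl).2 i
        · funext r k
          exact htr.2 r r.isLt k
      have hpc := point_cong f0 f (gm (gbar (Cm ω))) g' i s ω
        (fun j hj => (hgmne _ j hj).trans (hg'ne j hj).symm)
        (fun t ht => (hgmti _ t ht).trans (hg'ti t ht).symm) hs0
      simp only [hFdef]
      refine Finset.sum_congr rfl fun t ht => ?_
      rw [← (hpc t).1.1]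
      congr 1
      · funext j; exact ((hpc t).1.2 j).symm
      · funext j; exact ((hpc t).2 j).symm
  -- per-common-information optimality of gbar
  have key2 : ∀ cc : (Fin (s+1) → Z) × X i × (Fin s → ∀ j, U j),
      (∑ d : Fin (s+1) → X i, Sf (cc, d) (gbar cc))
        ≤ ∑ d : Fin (s+1) → X i, Sf (cc, d) (g i s cc.1 d cc.2.2) := by
    intro cc
    by_cases hall : ∀ d : Fin (s+1) → X i, Nf (cc, d) = 0
    · have hS0 : ∀ (d : Fin (s+1) → X i) (u : U i), Sf (cc, d) u = 0 := by
        intro d u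
        rw [hSfdef]
        refine Finset.sum_eq_zero fun ω _ => ?_
        by_cases hω : Cm ω = cc ∧ Dm ω = d
        · rw [if_pos hω]
          have hμz : μ ω = 0 := by
            have hN := hall d
            rw [hNfdef] at hN
            have hterm := (Finset.sum_eq_zero_iff_of_nonneg (fun ω' _ => by
              by_cases h : Cm ω' = cc ∧ Dm ω' = d
              · rw [if_pos h]; exact hμ0 ω'
              · rw [if_neg h])).mp hN ω (Finset.mem_univ ω)
            rw [if_pos hω] at hterm
            exact hterm
          rw [hμz, zero_mul]
        · rw [if_neg hω]
      simp only [hS0]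
      simp
    · push_neg at hall
      obtain ⟨d₀, hd₀⟩ := hall
      have hd₀pos : 0 < Nf (cc, d₀) := lt_of_le_of_ne (hNnn _) (Ne.symm hd₀)
      have hMpos : 0 < ∑ d : Fin (s+1) → X i, Nf (cc, d) :=
        lt_of_lt_of_le hd₀pos (Finset.single_le_sum (fun d _ => hNnn _) (Finset.mem_univ d₀))
      have hSd₀ : ∀ v, Sf (cc, d₀) (gbar cc) ≤ Sf (cc, d₀) v := by
        intro v
        have h1 : ∀ u : U i, (∑ d : Fin (s+1) → X i, Nf (cc, d)) * Sf (cc, d₀) u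
            = Nf (cc, d₀) * (∑ d : Fin (s+1) → X i, Sf (cc, d) u) := by
          intro u
          rw [Finset.sum_mul, Finset.mul_sum]
          exact Finset.sum_congr rfl fun d _ => hkey cc d₀ d u
        have h3 : (∑ d : Fin (s+1) → X i, Nf (cc, d)) * Sf (cc, d₀) (gbar cc)
            ≤ (∑ d : Fin (s+1) → X i, Nf (cc, d)) * Sf (cc, d₀) v := by
          rw [h1, h1]
          exact mul_le_mul_of_nonneg_left (hgbar cc v) (hNnn (cc, d₀))
        exact le_of_mul_le_mul_left h3 hMpos
      have h4 : Nf (cc, d₀) * (∑ d : Fin (s+1) → X i, Sf (cc, d) (gbar cc))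
          ≤ Nf (cc, d₀) * (∑ d : Fin (s+1) → X i, Sf (cc, d) (g i s cc.1 d cc.2.2)) := by
        rw [Finset.mul_sum, Finset.mul_sum]
        refine Finset.sum_le_sum fun d _ => ?_
        rw [hkey cc d d₀ (gbar cc), hkey cc d d₀ (g i s cc.1 d cc.2.2)]
        exact mul_le_mul_of_nonneg_left (hSd₀ _) (hNnn (cc, d))
      exact le_of_mul_le_mul_left h4 hd₀pos
  -- assemble
  refine ⟨g', hg'ne, hg'ti, hres', ?_⟩
  rw [hJg, hJg']
  simp only [mul_add]
  rw [Finset.sum_add_distrib, Finset.sum_add_distrib]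
  apply add_le_add_right
  calc ∑ ω : Omega T Z X W0 W, μ ω * F ω (gbar (Cm ω))
      = ∑ p : (((Fin (s+1) → Z) × X i × (Fin s → ∀ j, U j)) × (Fin (s+1) → X i)),
          Sf p (gbar p.1) := hgroup (fun cc _ => gbar cc)
    _ = ∑ cc : ((Fin (s+1) → Z) × X i × (Fin s → ∀ j, U j)),
          ∑ d : Fin (s+1) → X i, Sf (cc, d) (gbar cc) :=
        Fintype.sum_prod_type (fun p => Sf p (gbar p.1))
    _ ≤ ∑ cc : ((Fin (s+1) → Z) × X i × (Fin s → ∀ j, U j)),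
          ∑ d : Fin (s+1) → X i, Sf (cc, d) (g i s cc.1 d cc.2.2) :=
        Finset.sum_le_sum fun cc _ => key2 cc
    _ = ∑ p : (((Fin (s+1) → Z) × X i × (Fin s → ∀ j, U j)) × (Fin (s+1) → X i)),
          Sf p (g i s p.1.1 p.2 p.1.2.2) :=
        (Fintype.sum_prod_type (fun p => Sf p (g i s p.1.1 p.2 p.1.2.2))).symm
    _ = ∑ ω : Omega T Z X W0 W, μ ω * F ω (g i s (Cm ω).1 (Dm ω) (Cm ω).2.2) :=
        (hgroup (fun cc d => g i s cc.1 d cc.2.2)).symm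


lemma stage_sweep
    (hPZ : IsLaw PZ) (hPX : ∀ i z, IsLaw (PX i z)) (hPW0 : IsLaw PW0) (hPW : ∀ i, IsLaw (PW i))
    (c : ℕ → Z → (∀ i, X i) → (∀ i, U i) → ℝ) (s : ℕ) :
    ∀ (SS : Finset (Fin n)) (g : Strategy Z X U), (∀ j t, s < t → Restr g j t) →
      ∃ g' : Strategy Z X U, (∀ j t, s < t → Restr g' j t) ∧ (∀ j ∈ SS, Restr g' j s) ∧
        J f0 f c (weight (T := T) PZ PX PW0 PW) g' ≤
          J f0 f c (weight (T := T) PZ PX PW0 PW) g := by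
  intro SS
  induction SS using Finset.induction_on with
  | empty =>
    intro g hg
    exact ⟨g, hg, by simp, le_rfl⟩
  | @insert a SS ha IH =>
    intro g hg
    obtain ⟨g₁, hg₁res, hg₁S, hg₁J⟩ := IH g hg
    obtain ⟨g₂, h2ne, h2ti, h2s, h2J⟩ := one_step f0 f PZ PX PW0 PW hPZ hPX hPW0 hPW c g₁ a s
      (fun t ht => hg₁res a t ht)
    refine ⟨g₂, ?_, ?_, h2J.trans hg₁J⟩
    · intro j t ht
      rcases eq_or_ne j a with rfl | hj
      · intro zh xh xh' uh hl
        rw [h2ti t (by omega)]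
        exact hg₁res j t ht zh xh xh' uh hl
      · intro zh xh xh' uh hl
        rw [h2ne j hj]
        exact hg₁res j t ht zh xh xh' uh hl
    · intro j hj
      rcases eq_or_ne j a with rfl | hja
      · exact h2s
      · have hjSS : j ∈ SS := by
          rcases Finset.mem_insert.mp hj with h | h
          · exact absurd h hja
          · exact h
        intro zh xh xh' uh hl
        rw [h2ne j hja]
        exact hg₁S j hjSS zh xh xh' uh hl

lemma all_stages
    (hPZ : IsLaw PZ) (hPX : ∀ i z, IsLaw (PX i z)) (hPW0 : IsLaw PW0) (hPW : ∀ i, IsLaw (PW i))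
    (c : ℕ → Z → (∀ i, X i) → (∀ i, U i) → ℝ) (g : Strategy Z X U) :
    ∀ m : ℕ, ∃ g' : Strategy Z X U, (∀ j t, T - m ≤ t → Restr g' j t) ∧
      J f0 f c (weight (T := T) PZ PX PW0 PW) g' ≤
        J f0 f c (weight (T := T) PZ PX PW0 PW) g := by
  intro m
  induction m with
  | zero =>
    set g₀ : Strategy Z X U := fun j t => if t < T then g j t
      else (fun zh xh uh => g j t zh (fun _ => xh (Fin.last t)) uh) with hg₀
    refine ⟨g₀, ?_, ?_⟩
    · intro j t ht zh xh xh' uh hl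
      have hnt : ¬ t < T := by omega
      simp only [hg₀, if_neg hnt]
      rw [hl]
    · apply le_of_eq
      unfold J
      refine Finset.sum_congr rfl fun ω _ => ?_
      congr 1
      refine Finset.sum_congr rfl fun t ht => ?_
      have ht' : t < T := Finset.mem_range.mp ht
      have hagree : ∀ (j : Fin n) (r : ℕ), r ≤ t → g₀ j r = g j r := by
        intro j r hr
        have : r < T := by omega
        simp only [hg₀, if_pos this]
      have hsc := strat_cong f0 f g₀ g ω t
      have hZ := (hsc.1 (fun j r hr => hagree j r hr.le)).1
      have hX := (hsc.1 (fun j r hr => hagree j r hr.le)).2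
      have hU := hsc.2 hagree
      rw [hZ]
      congr 1
      · funext j; exact hX j
      · funext j; exact hU j
  | succ m IH =>
    obtain ⟨g₁, h1res, h1J⟩ := IH
    by_cases hTm : T ≤ m
    · refine ⟨g₁, ?_, h1J⟩
      intro j t ht
      exact h1res j t (by omega)
    · obtain ⟨g₂, h2res, h2S, h2J⟩ := stage_sweep f0 f PZ PX PW0 PW hPZ hPX hPW0 hPW c
        (T - (m+1)) Finset.univ g₁ (fun j t ht => h1res j t (by omega))
      refine ⟨g₂, ?_, h2J.trans h1J⟩
      intro j t ht
      rcases lt_or_eq_of_le ht with h | h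
      · exact h2res j t h
      · exact h ▸ h2S j (Finset.mem_univ j)

end Aux6
/-- Proposition 1 of Mahajan, "Optimal decentralized control of coupled
subsystems with control sharing": in the full observation model, restricting attention to
control laws of the form `Uⁱ_t = ḡⁱ_t(Xⁱ_t, Z_{1:t}, U_{1:t-1})` at all control stations is
without loss of optimality: for every strategy `g` of the general form
`Uⁱ_t = gⁱ_t(Z_{1:t}, Xⁱ_{1:t}, U_{1:t-1})` there is a strategy `ḡ` whose control laws do not
depend on the past local states `Xⁱ_{1:t-1}` (i.e. they are invariant under changing the local
state history off its current value) with `J(ḡ) ≤ J(g)`. -/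
theorem full_obs_irrelevant_local_history
    (PZ : Z → ℝ) (PX : ∀ i, Z → X i → ℝ) (PW0 : W0 → ℝ) (PW : ∀ i, W i → ℝ)
    (hPZ : IsLaw PZ) (hPX : ∀ i z, IsLaw (PX i z))
    (hPW0 : IsLaw PW0) (hPW : ∀ i, IsLaw (PW i))
    (c : ℕ → Z → (∀ i, X i) → (∀ i, U i) → ℝ)
    (g : Strategy Z X U) :
    ∃ gbar : Strategy Z X U,
      (∀ (i : Fin n) (t : ℕ) (zh : Fin (t + 1) → Z) (xh xh' : Fin (t + 1) → X i)
          (uh : Fin t → ∀ j, U j), xh (Fin.last t) = xh' (Fin.last t) →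
            gbar i t zh xh uh = gbar i t zh xh' uh) ∧
      J f0 f c (weight (T := T) PZ PX PW0 PW) gbar ≤
        J f0 f c (weight (T := T) PZ PX PW0 PW) g := by
  obtain ⟨g', hres, hJ⟩ := all_stages f0 f PZ PX PW0 PW hPZ hPX hPW0 hPW c g T
  exact ⟨g', fun i t zh xh xh' uh hl => hres i t (by omega) zh xh xh' uh hl, hJ⟩

end ControlSharing
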